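/- For all integers n ≥ 2 and k ≥ 2, both 1 and −1 are eigenvalues of the adjacency matrix of W_{n,k} over ℝ, each with algebraic multiplicity at least (k − 1)n. -/

import Mathlib

open Polynomial

/-- Vertex set of `W n k`: `Sum.inl (i, j)` is the vertex `v_{i,j}` and
`Sum.inr (i, j)` is the vertex `w_{i,j}`, for `i ∈ ℤ/nℤ` and `j ∈ {1, …, k}`. -/
abbrev WVert (n k : ℕ) : Type := (ZMod n × Fin k) ⊕ (ZMod n × Fin k)

/-- Adjacency of `W n k`: `v_{i,j} ~ w_{i',l}` iff `i' = i`, or `i = i' + 1` and `j = l`. -/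
def WAdj (n k : ℕ) : WVert n k → WVert n k → Prop
  | Sum.inl p, Sum.inr q => q.1 = p.1 ∨ (p.1 = q.1 + 1 ∧ p.2 = q.2)
  | Sum.inr q, Sum.inl p => q.1 = p.1 ∨ (p.1 = q.1 + 1 ∧ p.2 = q.2)
  | Sum.inl _, Sum.inl _ => False
  | Sum.inr _, Sum.inr _ => False

/-- The graph `W_{n,k}`: vertices `v_{i,j}` and `w_{i,j}` (`i ∈ ℤ/nℤ`, `1 ≤ j ≤ k`),
with edges `v_{i,j} w_{i,l}` for all `i, j, l`, and `w_{i,j} v_{i+1,j}` for all `i, j`. -/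
def W (n k : ℕ) : SimpleGraph (WVert n k) where
  Adj := WAdj n k
  symm := by
    constructor
    rintro (p | p) (q | q) h
    · exact h.elim
    · exact h
    · exact h
    · exact h.elim
  loopless := by constructor; rintro (p | p) h <;> exact h

instance (n k : ℕ) : DecidableRel (WAdj n k) := fun a b =>
  match a, b with
  | Sum.inl p, Sum.inr q =>
      inferInstanceAs (Decidable (q.1 = p.1 ∨ (p.1 = q.1 + 1 ∧ p.2 = q.2)))
  | Sum.inr q, Sum.inl p =>
      inferInstanceAs (Decidable (q.1 = p.1 ∨ (p.1 = q.1 + 1 ∧ p.2 = q.2)))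
  | Sum.inl _, Sum.inl _ => inferInstanceAs (Decidable False)
  | Sum.inr _, Sum.inr _ => inferInstanceAs (Decidable False)

instance (n k : ℕ) : DecidableRel (W n k).Adj :=
  inferInstanceAs (DecidableRel (WAdj n k))

open Polynomial

lemma charpoly_similar {m R : Type*} [Fintype m] [DecidableEq m] [CommRing R]
    (P Q M : Matrix m m R) (hPQ : P * Q = 1) :
    (P * M * Q).charpoly = M.charpoly := by
  have hmap : ∀ N₁ N₂ : Matrix m m R, (N₁ * N₂).map (C : R →+* R[X]) = N₁.map C * N₂.map C :=
    fun N₁ N₂ => Matrix.map_mul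
  have h1 : (1 : Matrix m m R).map (C : R →+* R[X]) = 1 := by
    ext i j
    by_cases h : i = j <;> simp [h, Matrix.one_apply]
  have hch : Matrix.charmatrix (P * M * Q) = P.map C * Matrix.charmatrix M * Q.map C := by
    rw [Matrix.charmatrix, Matrix.charmatrix]
    simp only [RingHom.mapMatrix_apply]
    rw [Matrix.mul_sub, Matrix.sub_mul]
    congr 1
    · rw [Matrix.scalar_apply, ← Matrix.smul_one_eq_diagonal, Matrix.mul_smul, Matrix.mul_one, Matrix.smul_mul,
        ← hmap, hPQ, h1]
    · rw [hmap, hmap]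
  rw [Matrix.charpoly, Matrix.charpoly, hch, Matrix.det_mul, Matrix.det_mul]
  have h2 : (P.map (C : R →+* R[X])).det * (Q.map C).det = 1 := by
    rw [← Matrix.det_mul, ← hmap, hPQ, h1, Matrix.det_one]
  calc (P.map (C : R →+* R[X])).det * (Matrix.charmatrix M).det * (Q.map C).det
      = (Matrix.charmatrix M).det * ((P.map C).det * (Q.map C).det) := by ring
    _ = (Matrix.charmatrix M).det := by rw [h2, mul_one]

lemma charpoly_diagonal {m R : Type*} [Fintype m] [DecidableEq m] [CommRing R]
    (d : m → R) : (Matrix.diagonal d).charpoly = ∏ i, (X - C (d i)) := by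
  have : Matrix.charmatrix (Matrix.diagonal d) = Matrix.diagonal fun i => X - C (d i) := by
    ext i j
    by_cases h : i = j
    · subst h; rw [Matrix.charmatrix_apply_eq]; simp
    · rw [Matrix.charmatrix_apply_ne _ _ _ h, Matrix.diagonal_apply_ne _ h,
        Matrix.diagonal_apply_ne _ h]; simp
  rw [Matrix.charpoly, this, Matrix.det_diagonal]
open Polynomial Matrix

section Aux
variable {n k : ℕ}

/-- building block: difference of two indicator vectors. -/
def cvec (k : ℕ) (ja jb : Fin k) : Fin k → ℝ := fun l =>
  (if l = ja then (1 : ℝ) else 0) - (if l = jb then (1 : ℝ) else 0)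

lemma sum_cvec {ja jb : Fin k} (hab : ja ≠ jb) : ∑ l, cvec k ja jb l = 0 := by
  clear hab
  simp [cvec, Finset.sum_sub_distrib, Finset.sum_ite_eq']

/-- eigenvector of `W n k` for eigenvalue `μ = ±1`, supported on `w_{i₀,·}` and `v_{i₀+1,·}`. -/
def evec (n k : ℕ) (μ : ℝ) (i₀ : ZMod n) (ja jb : Fin k) : WVert n k → ℝ
  | Sum.inl p => if p.1 = i₀ + 1 then μ * cvec k ja jb p.2 else 0
  | Sum.inr p => if p.1 = i₀ then cvec k ja jb p.2 else 0

lemma zmod_ne_add_one (hn : 2 ≤ n) (a : ZMod n) : a ≠ a + 1 := by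
  haveI : Fact (1 < n) := ⟨hn⟩
  intro h
  have h0 : (1 : ZMod n) = 0 := left_eq_add.mp h
  exact one_ne_zero h0

lemma evec_mulVec [NeZero n] (hn : 2 ≤ n) (μ : ℝ) (hμ : μ * μ = 1)
    (i₀ : ZMod n) (ja jb : Fin k) (hab : ja ≠ jb) :
    (W n k).adjMatrix ℝ *ᵥ evec n k μ i₀ ja jb = μ • evec n k μ i₀ ja jb := by
  haveI : Fact (1 < n) := ⟨hn⟩
  funext v
  rw [Matrix.mulVec, dotProduct]
  simp only [SimpleGraph.adjMatrix_apply, Pi.smul_apply, smul_eq_mul]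
  have hWA : ∀ a b, (W n k).Adj a b ↔ WAdj n k a b := fun a b => Iff.rfl
  simp only [hWA]
  rw [Fintype.sum_sum_type]
  obtain (⟨i, j⟩ | ⟨i, j⟩) := v
  · -- v_{i,j}
    have h1 : (∑ p : ZMod n × Fin k,
        (if WAdj n k (Sum.inl (i, j)) (Sum.inl p) then (1:ℝ) else 0) * evec n k μ i₀ ja jb (Sum.inl p)) = 0 := by
      simp [WAdj]
    have h2 : (∑ q : ZMod n × Fin k,
        (if WAdj n k (Sum.inl (i, j)) (Sum.inr q) then (1:ℝ) else 0) * evec n k μ i₀ ja jb (Sum.inr q))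
        = ∑ l : Fin k, (if (i₀ = i ∨ (i = i₀ + 1 ∧ j = l)) then (1:ℝ) else 0) * cvec k ja jb l := by
      rw [Fintype.sum_prod_type_right]
      refine Finset.sum_congr rfl fun l _ => ?_
      show (∑ i' : ZMod n,
        (if WAdj n k (Sum.inl (i, j)) (Sum.inr (i', l)) then (1:ℝ) else 0)
          * evec n k μ i₀ ja jb (Sum.inr (i', l))) = _
      simp only [WAdj, evec, mul_ite, mul_zero]
      rw [Finset.sum_ite_eq' Finset.univ i₀]
      simp
      by_cases hc : (i₀ = i ∨ i = i₀ + 1 ∧ j = l)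
      · show (if WAdj n k (Sum.inl (i, j)) (Sum.inr (i₀, l)) then (1:ℝ) else 0) * _ = _
        rw [if_pos (show WAdj n k (Sum.inl (i, j)) (Sum.inr (i₀, l)) from hc), one_mul, if_pos hc]
      · show (if WAdj n k (Sum.inl (i, j)) (Sum.inr (i₀, l)) then (1:ℝ) else 0) * _ = _
        rw [if_neg (show ¬ WAdj n k (Sum.inl (i, j)) (Sum.inr (i₀, l)) from hc), zero_mul, if_neg hc]
    rw [h1, h2, zero_add]
    rcases eq_or_ne i i₀ with hi | hi
    · subst hi
      simp only [true_or, if_true, one_mul]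
      rw [sum_cvec hab]
      simp [evec, zmod_ne_add_one hn i]
    · rcases eq_or_ne i (i₀ + 1) with hi2 | hi2
      · subst hi2
        simp only [zmod_ne_add_one hn i₀, false_or, true_and, ite_mul, one_mul, zero_mul]
        rw [Finset.sum_ite_eq Finset.univ j]
        simp only [Finset.mem_univ, if_true, evec]
        rw [← mul_assoc, hμ, one_mul]
      · have hcond : ∀ l : Fin k, ¬(i₀ = i ∨ (i = i₀ + 1 ∧ j = l)) := by
          intro l h
          rcases h with h | h
          · exact hi h.symm
          · exact hi2 h.1
        simp only [hcond, if_false, zero_mul, Finset.sum_const_zero]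
        simp [evec, hi2]
  · -- w_{i,j}
    have h1 : (∑ p : ZMod n × Fin k,
        (if WAdj n k (Sum.inr (i, j)) (Sum.inr p) then (1:ℝ) else 0) * evec n k μ i₀ ja jb (Sum.inr p)) = 0 := by
      simp [WAdj]
    have h2 : (∑ q : ZMod n × Fin k,
        (if WAdj n k (Sum.inr (i, j)) (Sum.inl q) then (1:ℝ) else 0) * evec n k μ i₀ ja jb (Sum.inl q))
        = ∑ l : Fin k, (if (i = i₀ + 1 ∨ (i₀ + 1 = i + 1 ∧ l = j)) then (1:ℝ) else 0) * (μ * cvec k ja jb l) := by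
      rw [Fintype.sum_prod_type_right]
      refine Finset.sum_congr rfl fun l _ => ?_
      show (∑ i' : ZMod n,
        (if WAdj n k (Sum.inr (i, j)) (Sum.inl (i', l)) then (1:ℝ) else 0)
          * evec n k μ i₀ ja jb (Sum.inl (i', l))) = _
      simp only [WAdj, evec, mul_ite, mul_zero]
      rw [Finset.sum_ite_eq' Finset.univ (i₀ + 1)]
      simp
    rw [h2, h1, add_zero]
    rcases eq_or_ne i i₀ with hi | hi
    · subst hi
      have hne : i ≠ i + 1 := zmod_ne_add_one hn i
      simp only [hne, false_or, true_and, ite_mul, one_mul, zero_mul]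
      rw [Finset.sum_ite_eq' Finset.univ j]
      simp [evec]
    · rcases eq_or_ne i (i₀ + 1) with hi2 | hi2
      · simp only [hi2, true_or, if_true, one_mul]
        rw [← Finset.mul_sum, sum_cvec hab, mul_zero]
        simp [evec, hi]
      · have hcond : ∀ l : Fin k, ¬(i = i₀ + 1 ∨ (i₀ + 1 = i + 1 ∧ l = j)) := by
          intro l h
          rcases h with h | h
          · exact hi2 h
          · exact hi (add_right_cancel h.1).symm
        simp only [hcond, if_false, zero_mul, Finset.sum_const_zero]
        simp [evec, hi]

end Aux
open Polynomial Matrix in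
lemma main_aux (n k : ℕ) [NeZero n] (hn : 2 ≤ n) (hk : 2 ≤ k) (μ : ℝ) (hμ : μ * μ = 1) :
    μ ∈ spectrum ℝ ((W n k).adjMatrix ℝ) ∧
      (k - 1) * n ≤ ((W n k).adjMatrix ℝ).charpoly.rootMultiplicity μ := by
  classical
  set A := (W n k).adjMatrix ℝ with hAdef
  set B : Matrix (WVert n k) (WVert n k) ℝ := A - μ • 1 with hBdef
  -- the distinguished indices
  have hk0 : 0 < k := by omega
  let jb : Fin k := ⟨k - 1, by omega⟩
  let emb : Fin (k - 1) → Fin k := fun j => ⟨j.1, lt_of_lt_of_le j.2 (Nat.sub_le k 1)⟩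
  have hembne : ∀ j, emb j ≠ jb := by
    intro j h
    have h2 := j.2
    rw [Fin.ext_iff] at h
    simp only [emb, jb] at h
    omega
  let f : ZMod n × Fin (k - 1) → (WVert n k → ℝ) := fun p => evec n k μ p.1 (emb p.2) jb
  have hker : ∀ p, B *ᵥ f p = 0 := by
    intro p
    rw [hBdef, Matrix.sub_mulVec, Matrix.smul_mulVec, Matrix.one_mulVec]
    rw [show A *ᵥ f p = μ • f p from evec_mulVec hn μ hμ _ _ _ (hembne p.2)]
    simp
  -- linear independence
  have hfind : LinearIndependent ℝ f := by
    apply LinearIndependent.of_comp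
      (LinearMap.funLeft ℝ ℝ (fun q : ZMod n × Fin (k - 1) => (Sum.inr (q.1, emb q.2) : WVert n k)))
    have hcomp : (⇑(LinearMap.funLeft ℝ ℝ
        (fun q : ZMod n × Fin (k - 1) => (Sum.inr (q.1, emb q.2) : WVert n k))) ∘ f)
        = ⇑(Pi.basisFun ℝ (ZMod n × Fin (k - 1))) := by
      funext p
      funext q
      simp only [Function.comp_apply, LinearMap.funLeft_apply, Pi.basisFun_apply, f, evec,
        Pi.single_apply, cvec, hembne q.2, if_false]
      have hemb : (emb q.2 = emb p.2) ↔ q.2 = p.2 := by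
        simp only [emb, Fin.ext_iff]
      by_cases h1 : q.1 = p.1 <;> by_cases h2 : q.2 = p.2 <;>
        simp [h1, h2, hemb, Prod.ext_iff]
    rw [hcomp]
    exact (Pi.basisFun ℝ _).linearIndependent
  -- nullity bound
  have hnull : (k - 1) * n ≤ Module.finrank ℝ (LinearMap.ker B.mulVecLin) := by
    have hmem : ∀ p, f p ∈ LinearMap.ker B.mulVecLin := by
      intro p
      rw [LinearMap.mem_ker, Matrix.mulVecLin_apply]
      exact hker p
    let f' : ZMod n × Fin (k - 1) → LinearMap.ker B.mulVecLin := fun p => ⟨f p, hmem p⟩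
    have hf' : LinearIndependent ℝ f' := by
      apply LinearIndependent.of_comp (LinearMap.ker B.mulVecLin).subtype
      exact hfind
    calc (k - 1) * n = Fintype.card (ZMod n × Fin (k - 1)) := by
          simp [ZMod.card, mul_comm]
      _ ≤ _ := hf'.fintype_card_le_finrank
  -- Hermitian
  have hA : A.IsHermitian := by
    rw [Matrix.IsHermitian, Matrix.conjTranspose_eq_transpose_of_trivial]
    exact (W n k).isSymm_adjMatrix
  set U : Matrix (WVert n k) (WVert n k) ℝ := (hA.eigenvectorUnitary : Matrix (WVert n k) (WVert n k) ℝ) with hUdef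
  have hUU : U * star U = 1 := Matrix.mem_unitaryGroup_iff.mp hA.eigenvectorUnitary.2
  have hUU' : star U * U = 1 := Matrix.mem_unitaryGroup_iff'.mp hA.eigenvectorUnitary.2
  set E : WVert n k → ℝ := hA.eigenvalues with hEdef
  have hcoe : (RCLike.ofReal ∘ E : WVert n k → ℝ) = E := by
    funext i; simp
  have hspec : A = U * Matrix.diagonal E * star U := by
    conv_lhs => rw [hA.spectral_theorem, Unitary.conjStarAlgAut_apply]
    rw [hcoe]
  -- decomposition of B
  have hBdecomp : B = U * Matrix.diagonal (fun i => E i - μ) * star U := by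
    have h1 : (μ • (1 : Matrix (WVert n k) (WVert n k) ℝ)) = U * (μ • 1) * star U := by
      rw [Matrix.mul_smul, Matrix.mul_one, Matrix.smul_mul, hUU]
    rw [hBdef, hspec]
    conv_lhs => rw [h1]
    rw [← Matrix.sub_mul, ← Matrix.mul_sub]
    congr 2
    rw [Matrix.smul_one_eq_diagonal, Matrix.diagonal_sub]
  have hUdet : IsUnit U.det := IsUnit.of_mul_eq_one _ (by rw [← Matrix.det_mul, hUU, Matrix.det_one])
  have hsUdet : IsUnit (star U).det :=
    IsUnit.of_mul_eq_one _ (by rw [← Matrix.det_mul, hUU', Matrix.det_one])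
  -- rank of B
  have hrankB : B.rank = (Finset.univ.filter (fun i => ¬ E i = μ)).card := by
    rw [hBdecomp, Matrix.rank_mul_eq_left_of_isUnit_det _ _ hsUdet,
      Matrix.rank_mul_eq_right_of_isUnit_det _ _ hUdet, Matrix.rank_diagonal,
      Fintype.card_subtype]
    congr 1
    apply Finset.filter_congr
    intro i _
    simp [sub_eq_zero]
  -- rank-nullity
  have hrn : B.rank + Module.finrank ℝ (LinearMap.ker B.mulVecLin) = Fintype.card (WVert n k) := by
    rw [Matrix.rank]
    rw [LinearMap.finrank_range_add_finrank_ker B.mulVecLin]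
    simp [Module.finrank_pi]
  -- charpoly
  have hcharA : A.charpoly = ∏ i, (X - C (E i)) := by
    rw [hspec, charpoly_similar _ _ _ hUU, _root_.charpoly_diagonal]
  set m := (Finset.univ.filter (fun i => E i = μ)).card with hmdef
  have hdvd : (X - C μ) ^ m ∣ A.charpoly := by
    rw [hcharA, hmdef]
    have : (X - C μ) ^ (Finset.univ.filter (fun i => E i = μ)).card
        = ∏ i ∈ Finset.univ.filter (fun i => E i = μ), (X - C (E i)) := by
      rw [Finset.prod_congr rfl (fun i hi => by rw [(Finset.mem_filter.mp hi).2]),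
        Finset.prod_const]
    rw [this]
    exact Finset.prod_dvd_prod_of_subset _ _ _ (Finset.filter_subset _ _)
  have hm : (k - 1) * n ≤ m := by
    have hsplit := Finset.card_filter_add_card_filter_not
      (s := (Finset.univ : Finset (WVert n k))) (p := fun i => E i = μ)
    rw [Finset.card_univ] at hsplit
    rw [← hrankB] at hsplit
    omega
  constructor
  · -- spectrum membership
    have hx0 : f (0, ⟨0, by omega⟩) ≠ 0 := by
      intro h
      have := congrFun h (Sum.inr ((0 : ZMod n), emb ⟨0, by omega⟩))
      simp [f, evec, cvec, hembne ⟨0, by omega⟩] at this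
    have hdet : B.det = 0 := Matrix.exists_mulVec_eq_zero_iff.mp ⟨_, hx0, hker _⟩
    rw [spectrum.mem_iff, Matrix.isUnit_iff_isUnit_det]
    have heq : algebraMap ℝ (Matrix (WVert n k) (WVert n k) ℝ) μ - A = -B := by
      rw [Algebra.algebraMap_eq_smul_one, hBdef, neg_sub]
    rw [heq, Matrix.det_neg, hdet, mul_zero]
    simp
  · have := (pow_dvd_pow (X - C μ) hm).trans hdvd
    rw [← Polynomial.le_rootMultiplicity_iff (A.charpoly_monic.ne_zero)] at this
    exact this
/-- Both `1` and `−1` are eigenvalues of `W_{n,k}`, each with algebraic multiplicity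
(multiplicity as a root of the characteristic polynomial) at least `(k − 1)n`. -/
theorem W_pm_one_eigenvalues (n k : ℕ) [NeZero n] (hn : 2 ≤ n) (hk : 2 ≤ k) :
    (1 : ℝ) ∈ spectrum ℝ ((W n k).adjMatrix ℝ) ∧
      (-1 : ℝ) ∈ spectrum ℝ ((W n k).adjMatrix ℝ) ∧
      (k - 1) * n ≤ ((W n k).adjMatrix ℝ).charpoly.rootMultiplicity 1 ∧
      (k - 1) * n ≤ ((W n k).adjMatrix ℝ).charpoly.rootMultiplicity (-1) := by
  have h1 := main_aux n k hn hk 1 (by norm_num)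
  have h2 := main_aux n k hn hk (-1) (by norm_num)
  exact ⟨h1.1, h2.1, h1.2, h2.2⟩
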